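/- Fix p ≥ 1, Lipschitz constants L₁,…,L_p ≥ 0, a map δ : X^p → X that is Lᵢ-Lipschitz in the i-th argument, and λ > 0. For two sequences x₁,…,x_T and x′₁,…,x′_T in X (with common initial history x_{1−p:0} = x′_{1−p:0}), define switching costs d_t = ½‖x_t − δ(x_{t−p},…,x_{t−1})‖² and d′_t = ½‖x′_t − δ(x′_{t−p},…,x′_{t−1})‖². Then Σ_{t=1}^T d_t − (1+λ) Σ_{t=1}^T d′_t ≤ (1+1/λ)·((1+Σ_{k=1}^p L_k)²/2)·Σ_{t=1}^T ‖x_t − x′_t‖². -/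

import Mathlib

open Finset

private lemma telescope_norm' {X : Type*} [NormedAddCommGroup X] (f : ℕ → X) (n : ℕ) :
    ‖f 0 - f n‖ ≤ ∑ k ∈ Finset.range n, ‖f k - f (k+1)‖ := by
  induction n with
  | zero => simp
  | succ n ih =>
    rw [Finset.sum_range_succ]
    have h : f 0 - f (n+1) = (f 0 - f n) + (f n - f (n+1)) := by abel
    calc ‖f 0 - f (n+1)‖ ≤ ‖f 0 - f n‖ + ‖f n - f (n+1)‖ := by rw [h]; exact norm_add_le _ _
      _ ≤ _ := by linarith

private lemma lipschitz_total' {X : Type*} [NormedAddCommGroup X] {p : ℕ}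
    (δ : (Fin p → X) → X) (L : Fin p → ℝ)
    (hδ : ∀ (i : Fin p) (u v : Fin p → X), (∀ j, j ≠ i → u j = v j) →
      ‖δ u - δ v‖ ≤ L i * ‖u i - v i‖)
    (u v : Fin p → X) :
    ‖δ u - δ v‖ ≤ ∑ i, L i * ‖u i - v i‖ := by
  set g : ℕ → (Fin p → X) := fun k i => if (i : ℕ) < k then v i else u i with hg
  have h0 : g 0 = u := by funext i; simp [hg]
  have hpv : g p = v := by funext i; simp [hg, i.isLt]
  set F : ℕ → ℝ := fun k => if h : k < p then L ⟨k,h⟩ * ‖u ⟨k,h⟩ - v ⟨k,h⟩‖ else 0 with hF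
  have key : ∀ k ∈ Finset.range p, ‖δ (g k) - δ (g (k+1))‖ ≤ F k := by
    intro k hk
    rw [Finset.mem_range] at hk
    rw [hF]
    simp only [hk, dif_pos]
    have hdiff : ∀ j, j ≠ (⟨k, hk⟩ : Fin p) → g k j = g (k+1) j := by
      intro j hj
      have hjk : (j : ℕ) ≠ k := fun h => hj (Fin.ext h)
      simp only [hg]
      rcases lt_trichotomy (j : ℕ) k with h | h | h
      · simp [h, Nat.lt_succ_of_lt h]
      · exact absurd h hjk
      · have h1 : ¬ (j : ℕ) < k := by omega
        have h2 : ¬ (j : ℕ) < k + 1 := by omega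
        simp [h1, h2]
    have := hδ ⟨k, hk⟩ (g k) (g (k+1)) hdiff
    have hgk : g k ⟨k, hk⟩ = u ⟨k, hk⟩ := by simp [hg]
    have hgk1 : g (k+1) ⟨k, hk⟩ = v ⟨k, hk⟩ := by simp [hg]
    rwa [hgk, hgk1] at this
  calc ‖δ u - δ v‖ = ‖(fun k => δ (g k)) 0 - (fun k => δ (g k)) p‖ := by rw [show (fun k => δ (g k)) 0 = δ u from by show δ (g 0) = δ u; rw [h0], show (fun k => δ (g k)) p = δ v from by show δ (g p) = δ v; rw [hpv]]
    _ ≤ ∑ k ∈ Finset.range p, ‖δ (g k) - δ (g (k+1))‖ := telescope_norm' (fun k => δ (g k)) p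
    _ ≤ ∑ k ∈ Finset.range p, F k := Finset.sum_le_sum key
    _ = ∑ i : Fin p, F i := (Fin.sum_univ_eq_sum_range F p).symm
    _ = ∑ i, L i * ‖u i - v i‖ := by
        apply Finset.sum_congr rfl
        intro i _
        simp [hF, i.isLt]


/-- comparison of multi-step switching costs of two action
sequences.  Actions are indexed by `ℤ`; the history fed to `δ` at time `t` is
`(x_{t-1}, x_{t-2}, …, x_{t-p})`, i.e. coordinate `i` of the argument of `δ`
is the action with lag `i+1`, and `δ` is `L i`-Lipschitz in that coordinate
(so `L i` is the Lipschitz constant w.r.t. `x_{t-(i+1)}`).  The sequences share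
the initial history `x_t = x'_t` for `t ≤ 0`.  Then
`Σ_{t=1}^T d_t − (1+λ) Σ_{t=1}^T d'_t
  ≤ (1+1/λ)·((1+ΣL)²/2)·Σ_{t=1}^T ‖x_t − x'_t‖²`. -/
theorem switching_cost_smoothness
    {X : Type*} [NormedAddCommGroup X] [InnerProductSpace ℝ X]
    {p : ℕ} (hp : 1 ≤ p) (T : ℕ)
    (δ : (Fin p → X) → X) (L : Fin p → ℝ) (hL : ∀ i, 0 ≤ L i)
    (hδ : ∀ (i : Fin p) (u v : Fin p → X), (∀ j, j ≠ i → u j = v j) →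
      ‖δ u - δ v‖ ≤ L i * ‖u i - v i‖)
    (lam : ℝ) (hlam : 0 < lam)
    (x x' : ℤ → X) (hinit : ∀ t : ℤ, t ≤ 0 → x t = x' t)
    (d d' : ℤ → ℝ)
    (hd : ∀ t : ℤ, d t = (1 / 2) * ‖x t - δ (fun i => x (t - (i + 1)))‖ ^ 2)
    (hd' : ∀ t : ℤ, d' t = (1 / 2) * ‖x' t - δ (fun i => x' (t - (i + 1)))‖ ^ 2) :
    (∑ t ∈ Finset.Icc (1 : ℤ) T, d t) - (1 + lam) * ∑ t ∈ Finset.Icc (1 : ℤ) T, d' t ≤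
      (1 + 1 / lam) * ((1 + ∑ k, L k) ^ 2 / 2) *
        ∑ t ∈ Finset.Icc (1 : ℤ) T, ‖x t - x' t‖ ^ 2 := by
  set e : ℤ → ℝ := fun s => ‖x s - x' s‖ with he
  have he0 : ∀ s : ℤ, s ≤ 0 → e s = 0 := fun s hs => by simp [he, hinit s hs]
  have henn : ∀ s, 0 ≤ e s := fun s => norm_nonneg _
  set S : ℝ := ∑ k, L k with hS
  have hSnn : 0 ≤ S := Finset.sum_nonneg fun i _ => hL i
  have hmu : 0 < 1 / lam := by positivity
  have hfac : 0 ≤ (1 + 1/lam) * ((1 + S) / 2) := by positivity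
  -- per-time-step bound
  have per_t : ∀ t : ℤ, d t - (1 + lam) * d' t ≤
      (1 + 1/lam) * ((1 + S) / 2) * (e t ^ 2 + ∑ i, L i * e (t - ((i : ℤ) + 1)) ^ 2) := by
    intro t
    set a := x t - δ (fun i => x (t - ((i : ℤ) + 1))) with ha
    set b := x' t - δ (fun i => x' (t - ((i : ℤ) + 1))) with hb
    set B : ℝ := ∑ i, L i * e (t - ((i : ℤ) + 1)) with hB
    set C : ℝ := ∑ i, L i * e (t - ((i : ℤ) + 1)) ^ 2 with hC
    have hBnn : 0 ≤ B := Finset.sum_nonneg fun i _ => mul_nonneg (hL i) (henn _)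
    have hCnn : 0 ≤ C := Finset.sum_nonneg fun i _ => mul_nonneg (hL i) (sq_nonneg _)
    have hab : ‖a - b‖ ≤ e t + B := by
      have h1 : a - b = (x t - x' t) -
          (δ (fun i => x (t - ((i : ℤ) + 1))) - δ (fun i => x' (t - ((i : ℤ) + 1)))) := by
        rw [ha, hb]; abel
      have h2 : ‖δ (fun i => x (t - ((i : ℤ) + 1))) - δ (fun i => x' (t - ((i : ℤ) + 1)))‖ ≤ B :=
        lipschitz_total' δ L hδ _ _
      calc ‖a - b‖ ≤ ‖x t - x' t‖ +
            ‖δ (fun i => x (t - ((i : ℤ) + 1))) - δ (fun i => x' (t - ((i : ℤ) + 1)))‖ := by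
            rw [h1]; exact norm_sub_le _ _
        _ ≤ e t + B := by exact add_le_add le_rfl h2
    -- Peter–Paul
    have hpp : ‖a‖ ^ 2 ≤ (1 + lam) * ‖b‖ ^ 2 + (1 + 1/lam) * ‖a - b‖ ^ 2 := by
      have htri : ‖a‖ ≤ ‖b‖ + ‖a - b‖ := by
        have hba : b + (a - b) = a := by abel
        calc ‖a‖ = ‖b + (a - b)‖ := by rw [hba]
          _ ≤ ‖b‖ + ‖a - b‖ := norm_add_le _ _
      have hasq : ‖a‖ ^ 2 ≤ (‖b‖ + ‖a - b‖) ^ 2 :=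
        pow_le_pow_left₀ (norm_nonneg a) htri 2
      have hml : lam * (1/lam) = 1 := by field_simp
      nlinarith [mul_nonneg hmu.le (sq_nonneg (lam * ‖b‖ - ‖a - b‖))]
    -- weighted Jensen
    have hCS : B ^ 2 ≤ S * C := by
      rw [hB, hS, hC]
      exact Finset.sum_sq_le_sum_mul_sum_of_sq_eq_mul Finset.univ
        (fun i _ => hL i) (fun i _ => mul_nonneg (hL i) (sq_nonneg _))
        (fun i _ => by ring)
    have hAM : 2 * e t * B ≤ S * e t ^ 2 + C := by
      calc 2 * e t * B = ∑ i, 2 * e t * (L i * e (t - ((i : ℤ) + 1))) := by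
            rw [hB, Finset.mul_sum]
        _ ≤ ∑ i, (L i * e t ^ 2 + L i * e (t - ((i : ℤ) + 1)) ^ 2) :=
            Finset.sum_le_sum fun i _ => by
              nlinarith [mul_nonneg (hL i) (sq_nonneg (e t - e (t - ((i : ℤ) + 1))))]
        _ = S * e t ^ 2 + C := by
            rw [Finset.sum_add_distrib, hS, hC, Finset.sum_mul]
    have hjen : (e t + B) ^ 2 ≤ (1 + S) * (e t ^ 2 + C) := by nlinarith
    have habsq : ‖a - b‖ ^ 2 ≤ (e t + B) ^ 2 :=
      pow_le_pow_left₀ (norm_nonneg _) hab 2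
    rw [hd t, hd' t, ← ha, ← hb]
    have hfac2 : 0 ≤ 1 + 1/lam := by positivity
    nlinarith [mul_le_mul_of_nonneg_left habsq hfac2,
      mul_le_mul_of_nonneg_left hjen hfac2]
  -- shifting the time index
  have sum_shift : ∀ i : Fin p,
      ∑ t ∈ Finset.Icc (1 : ℤ) T, e (t - ((i : ℤ) + 1)) ^ 2 ≤
        ∑ t ∈ Finset.Icc (1 : ℤ) T, e t ^ 2 := by
    intro i
    set k : ℤ := (i : ℤ) + 1 with hk
    have hk1 : 1 ≤ k := by
      have : (0 : ℤ) ≤ (i : ℤ) := by exact_mod_cast Nat.zero_le (i : ℕ)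
      omega
    calc ∑ t ∈ Finset.Icc (1 : ℤ) T, e (t - k) ^ 2
        = ∑ s ∈ Finset.Icc (1 - k) ((T : ℤ) - k), e s ^ 2 := by
          rw [show (1 : ℤ) - k = 1 + (-k) by ring, show (T : ℤ) - k = (T : ℤ) + (-k) by ring,
            ← Finset.map_add_right_Icc, Finset.sum_map]
          exact Finset.sum_congr rfl fun t _ => by
            simp [addRightEmbedding_apply, sub_eq_add_neg]
      _ = ∑ s ∈ (Finset.Icc (1 - k) ((T : ℤ) - k)).filter (fun s => 1 ≤ s), e s ^ 2 := by
          refine (Finset.sum_filter_of_ne ?_).symm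
          intro s _ hne
          by_contra h
          push_neg at h
          exact hne (by rw [he0 s (by omega)]; ring)
      _ ≤ ∑ t ∈ Finset.Icc (1 : ℤ) T, e t ^ 2 := by
          apply Finset.sum_le_sum_of_subset_of_nonneg
          · intro s hs
            simp only [Finset.mem_filter, Finset.mem_Icc] at hs ⊢
            omega
          · exact fun s _ _ => sq_nonneg _
  have sum_inner : ∑ t ∈ Finset.Icc (1 : ℤ) T, ∑ i, L i * e (t - ((i : ℤ) + 1)) ^ 2 ≤
      S * ∑ t ∈ Finset.Icc (1 : ℤ) T, e t ^ 2 := by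
    rw [Finset.sum_comm]
    calc ∑ i, ∑ t ∈ Finset.Icc (1 : ℤ) T, L i * e (t - ((i : ℤ) + 1)) ^ 2
        = ∑ i, L i * ∑ t ∈ Finset.Icc (1 : ℤ) T, e (t - ((i : ℤ) + 1)) ^ 2 := by
          exact Finset.sum_congr rfl fun i _ => (Finset.mul_sum _ _ _).symm
      _ ≤ ∑ i : Fin p, L i * ∑ t ∈ Finset.Icc (1 : ℤ) T, e t ^ 2 :=
          Finset.sum_le_sum fun i _ => mul_le_mul_of_nonneg_left (sum_shift i) (hL i)
      _ = S * ∑ t ∈ Finset.Icc (1 : ℤ) T, e t ^ 2 := by rw [hS, Finset.sum_mul]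
  calc (∑ t ∈ Finset.Icc (1 : ℤ) T, d t) - (1 + lam) * ∑ t ∈ Finset.Icc (1 : ℤ) T, d' t
      = ∑ t ∈ Finset.Icc (1 : ℤ) T, (d t - (1 + lam) * d' t) := by
        rw [Finset.sum_sub_distrib, Finset.mul_sum]
    _ ≤ ∑ t ∈ Finset.Icc (1 : ℤ) T,
          (1 + 1/lam) * ((1 + S) / 2) * (e t ^ 2 + ∑ i, L i * e (t - ((i : ℤ) + 1)) ^ 2) :=
        Finset.sum_le_sum fun t _ => per_t t
    _ = (1 + 1/lam) * ((1 + S) / 2) * (∑ t ∈ Finset.Icc (1 : ℤ) T, e t ^ 2 +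
          ∑ t ∈ Finset.Icc (1 : ℤ) T, ∑ i, L i * e (t - ((i : ℤ) + 1)) ^ 2) := by
        rw [← Finset.mul_sum, Finset.sum_add_distrib]
    _ ≤ (1 + 1/lam) * ((1 + S) / 2) * (∑ t ∈ Finset.Icc (1 : ℤ) T, e t ^ 2 +
          S * ∑ t ∈ Finset.Icc (1 : ℤ) T, e t ^ 2) :=
        mul_le_mul_of_nonneg_left (add_le_add le_rfl sum_inner) hfac
    _ = (1 + 1/lam) * ((1 + S) ^ 2 / 2) * ∑ t ∈ Finset.Icc (1 : ℤ) T, e t ^ 2 := by ring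
    _ = (1 + 1/lam) * ((1 + S) ^ 2 / 2) * ∑ t ∈ Finset.Icc (1 : ℤ) T, ‖x t - x' t‖ ^ 2 := by
        simp only [he]
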